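/- arXiv:0704.2384 — 2 statements merged into one kernel-verified Lean document; each statement's English description precedes it below -/
import Mathlib

section
/- Let s be a Hadamard matrix of order 4k (k > 1) with s_{i,1} = 1 for all i, fix a column index i ≠ 1, and let N̂_i be the (4k−2)×(4k−2) matrix with rows and columns indexed by the column indices j, m ∉ {1, i} and entries (N̂_i)_{j,m} = N_{ij}^m := (1/4) Σ_{l=1}^{4k} s_{li} s_{lj} s_{lm}. Then the (8k−4)×(8k−4) block matrix W_i := [[N̂_i + I, N̂_i − I], [N̂_i − I, −N̂_i − I]] satisfies W_i · W_iᵀ = (2k² + 2)·I. -/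
open scoped BigOperators

/-- The matrix `N̂_i`: rows and columns indexed by the column indices
different from `z` (the index of the all-ones column) and from `i`, with
entries the structure constants `N_{ij}^m = (1/4) ∑ l, s l i * s l j * s l m`. -/
def hadamardNhat {n : ℕ} (s : Matrix (Fin n) (Fin n) ℤ) (z i : Fin n) :
    Matrix {x : Fin n // x ≠ z ∧ x ≠ i} {x : Fin n // x ≠ z ∧ x ≠ i} ℤ :=
  fun j m => (∑ l, s l i * s l j.1 * s l m.1) / 4

lemma hadamard_aux_q {n : ℕ} (c : ℚ) (hc : c ≠ 0) (A : Matrix (Fin n) (Fin n) ℚ)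
    (h : A * A.transpose = c • 1) : A.transpose * A = c • 1 := by
  have h1 : A * (c⁻¹ • A.transpose) = 1 := by
    rw [Matrix.mul_smul, h, smul_smul, inv_mul_cancel₀ hc, one_smul]
  have h2 : (c⁻¹ • A.transpose) * A = 1 := mul_eq_one_comm.mp h1
  calc A.transpose * A = c • ((c⁻¹ • A.transpose) * A) := by
        rw [Matrix.smul_mul, smul_smul, mul_inv_cancel₀ hc, one_smul]
    _ = c • 1 := by rw [h2]

lemma hadamard_rowOrth {n : ℕ} (c : ℤ) (s : Matrix (Fin n) (Fin n) ℤ)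
    (hH : s * s.transpose = c • 1) (l l' : Fin n) :
    ∑ p, s l p * s l' p = if l = l' then c else 0 := by
  have h : (s * s.transpose) l l' = (c • (1 : Matrix (Fin n) (Fin n) ℤ)) l l' := by rw [hH]
  simpa [Matrix.mul_apply, Matrix.one_apply, mul_ite] using h

lemma hadamard_colOrth {n : ℕ} (c : ℤ) (hc : c ≠ 0) (s : Matrix (Fin n) (Fin n) ℤ)
    (hH : s * s.transpose = c • 1) (j m : Fin n) :
    ∑ l, s l j * s l m = if j = m then c else 0 := by
  set A : Matrix (Fin n) (Fin n) ℚ := fun l p => (s l p : ℚ) with hA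
  have h : A * A.transpose = (c : ℚ) • 1 := by
    ext l l'
    have h0 := congrArg (Int.cast : ℤ → ℚ) (hadamard_rowOrth c s hH l l')
    push_cast at h0
    simp only [Matrix.mul_apply, Matrix.transpose_apply, Matrix.smul_apply,
      Matrix.one_apply]
    simp only [hA]
    rw [h0]
    split_ifs <;> simp
  have h2 := hadamard_aux_q (c : ℚ) (by exact_mod_cast hc) A h
  have h3 : (A.transpose * A) j m = ((c : ℚ) • (1 : Matrix (Fin n) (Fin n) ℚ)) j m := by
    rw [h2]
  simp only [Matrix.mul_apply, Matrix.transpose_apply, Matrix.smul_apply,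
    Matrix.one_apply] at h3
  simp only [hA] at h3
  have h4 : ((∑ l, s l j * s l m : ℤ) : ℚ) = if j = m then (c : ℚ) else 0 := by
    push_cast
    rw [h3]
    split_ifs <;> simp
  split_ifs at h4 ⊢ with hjm
  · exact_mod_cast h4
  · exact_mod_cast h4

lemma hadamard_subtypeSum {n : ℕ} (z i : Fin n) (hzi : z ≠ i) (f : Fin n → ℤ) :
    ∑ p : {x : Fin n // x ≠ z ∧ x ≠ i}, f p.1 = (∑ p, f p) - f z - f i := by
  have h1 : ∑ p ∈ (Finset.univ \ {z, i}), f p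
      = ∑ p : {x : Fin n // x ≠ z ∧ x ≠ i}, f p.1 := by
    apply Finset.sum_subtype
    intro x
    simp [Finset.mem_sdiff, not_or]
  rw [← h1, Finset.sum_sdiff_eq_sub (Finset.subset_univ _), Finset.sum_pair hzi]
  ring

lemma hadamard_sign_dvd (a b c : ℤ) (ha : a = 1 ∨ a = -1) (hb : b = 1 ∨ b = -1)
    (hc : c = 1 ∨ c = -1) : (4 : ℤ) ∣ (1 + a) * (1 + b) * (1 + c) := by
  rcases ha with ha | ha <;> rcases hb with hb | hb <;> rcases hc with hc | hc <;>
    subst ha <;> subst hb <;> subst hc <;> decide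

section
variable {n : ℕ} (c : ℤ) (hc : c ≠ 0) (s : Matrix (Fin n) (Fin n) ℤ)
  (hpm : ∀ a b, s a b = 1 ∨ s a b = -1)
  (hH : s * s.transpose = c • 1)
  (z : Fin n) (h1 : ∀ l, s l z = 1)

include hc hH h1 in
lemma hadamard_colzero (a : Fin n) (ha : a ≠ z) : ∑ l, s l a = 0 := by
  have h := hadamard_colOrth c hc s hH z a
  rw [if_neg (Ne.symm ha)] at h
  rw [← h]
  apply Finset.sum_congr rfl
  intro l _
  rw [h1 l, one_mul]

include hc hpm hH h1 in
lemma hadamard_triple_dvd (hcn : c = (n : ℤ)) (hc4 : (4 : ℤ) ∣ c)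
    (i j m : Fin n) (hiz : i ≠ z) (hjz : j ≠ z) (hji : j ≠ i)
    (hmz : m ≠ z) (hmi : m ≠ i) :
    (4 : ℤ) ∣ ∑ l, s l i * s l j * s l m := by
  by_cases hjm : j = m
  · subst hjm
    have he : ∀ l, s l i * s l j * s l j = s l i := by
      intro l
      rcases hpm l j with h | h <;> rw [h] <;> ring
    rw [Finset.sum_congr rfl (fun l _ => he l), hadamard_colzero c hc s hH z h1 i hiz]
    exact dvd_zero 4
  · have expand : ∀ l : Fin n, s l i * s l j * s l m =
        (1 + s l i) * (1 + s l j) * (1 + s l m) - 1 - s l i - s l j - s l m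
          - s l i * s l j - s l i * s l m - s l j * s l m := fun l => by ring
    rw [Finset.sum_congr rfl (fun l _ => expand l)]
    simp only [Finset.sum_sub_distrib]
    rw [hadamard_colzero c hc s hH z h1 i hiz, hadamard_colzero c hc s hH z h1 j hjz,
      hadamard_colzero c hc s hH z h1 m hmz,
      hadamard_colOrth c hc s hH i j, hadamard_colOrth c hc s hH i m,
      hadamard_colOrth c hc s hH j m,
      if_neg (Ne.symm hji), if_neg (Ne.symm hmi), if_neg hjm]
    have hone : ∑ _l : Fin n, (1 : ℤ) = c := by
      simp [hcn]
    rw [hone]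
    have hS : (4 : ℤ) ∣ ∑ l, (1 + s l i) * (1 + s l j) * (1 + s l m) :=
      Finset.dvd_sum fun l _ => hadamard_sign_dvd _ _ _ (hpm l i) (hpm l j) (hpm l m)
    omega

include hc hpm hH h1 in
lemma hadamard_mainSum (i : Fin n) (hi : i ≠ z)
    (j m : Fin n) (hjz : j ≠ z) (hji : j ≠ i) :
    ∑ p : {x : Fin n // x ≠ z ∧ x ≠ i},
      (∑ l, s l i * s l j * s l p.1) * (∑ l, s l i * s l p.1 * s l m) =
      if j = m then c ^ 2 else 0 := by
  set T : Fin n → Fin n → ℤ := fun a b => ∑ l, s l i * s l a * s l b with hT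
  have step1 : ∀ l l' : Fin n,
      (∑ p, (s l i * s l j * s l p) * (s l' i * s l' p * s l' m))
      = (s l i * s l j * (s l' i * s l' m)) * (if l = l' then c else 0) := by
    intro l l'
    rw [← hadamard_rowOrth c s hH l l', Finset.mul_sum]
    apply Finset.sum_congr rfl; intro p _; ring
  have full : ∑ p, T j p * T p m = if j = m then c ^ 2 else 0 := by
    calc ∑ p, T j p * T p m
        = ∑ p, ∑ l, ∑ l', (s l i * s l j * s l p) * (s l' i * s l' p * s l' m) :=
          Finset.sum_congr rfl (fun p _ => Finset.sum_mul_sum _ _ _ _)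
      _ = ∑ l, ∑ p, ∑ l', (s l i * s l j * s l p) * (s l' i * s l' p * s l' m) :=
          Finset.sum_comm
      _ = ∑ l, ∑ l', ∑ p, (s l i * s l j * s l p) * (s l' i * s l' p * s l' m) :=
          Finset.sum_congr rfl (fun l _ => Finset.sum_comm)
      _ = ∑ l, ∑ l', (s l i * s l j * (s l' i * s l' m)) * (if l = l' then c else 0) :=
          Finset.sum_congr rfl (fun l _ => Finset.sum_congr rfl (fun l' _ => step1 l l'))
      _ = ∑ l, (s l i * s l j * (s l i * s l m)) * c := by
          apply Finset.sum_congr rfl; intro l _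
          simp [mul_ite, mul_zero]
      _ = c * ∑ l, s l j * s l m := by
          rw [Finset.mul_sum]
          apply Finset.sum_congr rfl; intro l _
          rcases hpm l i with h | h <;> rw [h] <;> ring
      _ = if j = m then c ^ 2 else 0 := by
          rw [hadamard_colOrth c hc s hH j m]
          split_ifs <;> ring
  have fz : T j z * T z m = 0 := by
    have hz1 : T j z = 0 := by
      have : T j z = ∑ l, s l i * s l j := by
        apply Finset.sum_congr rfl; intro l _
        simp [h1 l]
      rw [this, hadamard_colOrth c hc s hH i j, if_neg (Ne.symm hji)]
    rw [hz1, zero_mul]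
  have fi : T j i * T i m = 0 := by
    have hi1 : T j i = 0 := by
      have : T j i = ∑ l, s l j := by
        apply Finset.sum_congr rfl; intro l _
        rcases hpm l i with h | h <;> rw [h] <;> ring
      rw [this, hadamard_colzero c hc s hH z h1 j hjz]
    rw [hi1, zero_mul]
  rw [hadamard_subtypeSum z i (Ne.symm hi) (fun p => T j p * T p m), full, fz, fi]
  ring

include hc hpm hH h1 in
lemma hadamard_Nsq (hcn : c = (n : ℤ)) (d : ℤ) (hcd : c = 4 * d)
    (i : Fin n) (hi : i ≠ z) :
    hadamardNhat s z i * hadamardNhat s z i = (d ^ 2) • 1 := by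
  ext j m
  have hdvd : ∀ a b : Fin n, a ≠ z → a ≠ i → b ≠ z → b ≠ i →
      (4 : ℤ) ∣ ∑ l, s l i * s l a * s l b := fun a b haz hai hbz hbi =>
    hadamard_triple_dvd c hc s hpm hH z h1 hcn ⟨d, hcd⟩ i a b hi haz hai hbz hbi
  have key : (16 : ℤ) * ∑ p : {x : Fin n // x ≠ z ∧ x ≠ i},
      hadamardNhat s z i j p * hadamardNhat s z i p m
      = 16 * (((d ^ 2) • (1 : Matrix {x : Fin n // x ≠ z ∧ x ≠ i}
          {x : Fin n // x ≠ z ∧ x ≠ i} ℤ)) j m) := by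
    rw [Finset.mul_sum]
    have e : ∀ p : {x : Fin n // x ≠ z ∧ x ≠ i},
        16 * (hadamardNhat s z i j p * hadamardNhat s z i p m)
        = (∑ l, s l i * s l j.1 * s l p.1) * (∑ l, s l i * s l p.1 * s l m.1) := by
      intro p
      obtain ⟨a, ha⟩ := hdvd j.1 p.1 j.2.1 j.2.2 p.2.1 p.2.2
      obtain ⟨b, hb⟩ := hdvd p.1 m.1 p.2.1 p.2.2 m.2.1 m.2.2
      show 16 * ((∑ l, s l i * s l j.1 * s l p.1) / 4
          * ((∑ l, s l i * s l p.1 * s l m.1) / 4)) = _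
      rw [ha, hb, Int.mul_ediv_cancel_left _ (by norm_num),
        Int.mul_ediv_cancel_left _ (by norm_num)]
      ring
    rw [Finset.sum_congr rfl (fun p _ => e p),
      hadamard_mainSum c hc s hpm hH z h1 i hi j.1 m.1 j.2.1 j.2.2]
    simp only [Matrix.smul_apply, Matrix.one_apply, smul_eq_mul]
    have hc16 : c ^ 2 = 16 * d ^ 2 := by rw [hcd]; ring
    rw [hc16]
    by_cases h : (j : Fin n) = (m : Fin n)
    · rw [if_pos h, if_pos (Subtype.ext h)]; ring
    · rw [if_neg h, if_neg (fun hh => h (congrArg Subtype.val hh))]; ring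
  rw [Matrix.mul_apply]
  exact mul_left_cancel₀ (by norm_num : (16 : ℤ) ≠ 0) key
end

/-- Let `s` be a Hadamard matrix of order `4k` (`k > 1`)
whose column `z` (the first column) is all ones, and fix a column index
`i ≠ z`.  Then the `(8k−4)×(8k−4)` block matrix
`W_i = [[N̂_i + I, N̂_i − I], [N̂_i − I, −N̂_i − I]]` satisfies
`W_i ⬝ W_iᵀ = (2k² + 2) I`. -/
theorem hadamard_Nhat_block_orthogonal
    (k : ℕ) (hk : 1 < k)
    (s : Matrix (Fin (4 * k)) (Fin (4 * k)) ℤ)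
    (hpm : ∀ i j, s i j = 1 ∨ s i j = -1)
    (hH : s * s.transpose = (4 * (k : ℤ)) • 1)
    (z : Fin (4 * k)) (hz : (z : ℕ) = 0)
    (h1 : ∀ i, s i z = 1)
    (i : Fin (4 * k)) (hi : i ≠ z) :
    (Matrix.fromBlocks
        (hadamardNhat s z i + 1) (hadamardNhat s z i - 1)
        (hadamardNhat s z i - 1) (-(hadamardNhat s z i) - 1)) *
      (Matrix.fromBlocks
        (hadamardNhat s z i + 1) (hadamardNhat s z i - 1)
        (hadamardNhat s z i - 1) (-(hadamardNhat s z i) - 1)).transpose =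
      (2 * (k : ℤ) ^ 2 + 2) • 1 := by
  have hc : (4 * (k : ℤ)) ≠ 0 := by positivity
  have hcn : (4 * (k : ℤ)) = ((4 * k : ℕ) : ℤ) := by push_cast; ring
  have hN2 : hadamardNhat s z i * hadamardNhat s z i = ((k : ℤ) ^ 2) • 1 :=
    hadamard_Nsq (4 * (k : ℤ)) hc s hpm hH z h1 hcn (k : ℤ) rfl i hi
  set N := hadamardNhat s z i with hN
  have hNt : N.transpose = N := by
    ext j m
    show N m j = N j m
    rw [hN]
    show (∑ l, s l i * s l m.1 * s l j.1) / 4 = (∑ l, s l i * s l j.1 * s l m.1) / 4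
    congr 1
    exact Finset.sum_congr rfl fun l _ => by ring
  rw [Matrix.fromBlocks_transpose]
  simp only [Matrix.transpose_add, Matrix.transpose_sub, Matrix.transpose_neg,
    Matrix.transpose_one, hNt]
  rw [Matrix.fromBlocks_multiply]
  have hdiag : ∀ X Y : Matrix {x : Fin (4 * k) // x ≠ z ∧ x ≠ i}
      {x : Fin (4 * k) // x ≠ z ∧ x ≠ i} ℤ,
      X = N * N + N * N + (1 + 1) →
      X = (2 * (k : ℤ) ^ 2 + 2) • 1 ∧ Y = Y := by
    intro X Y hX
    refine ⟨?_, rfl⟩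
    rw [hX, hN2]
    ext a b
    simp only [Matrix.add_apply, Matrix.smul_apply, Matrix.one_apply, smul_eq_mul]
    split_ifs <;> ring
  have hb1 : (N + 1) * (N + 1) + (N - 1) * (N - 1) = (2 * (k : ℤ) ^ 2 + 2) • 1 :=
    (hdiag _ 0 (by noncomm_ring)).1
  have hb4 : (N - 1) * (N - 1) + (-N - 1) * (-N - 1) = (2 * (k : ℤ) ^ 2 + 2) • 1 :=
    (hdiag _ 0 (by noncomm_ring)).1
  have hb2 : (N + 1) * (N - 1) + (N - 1) * (-N - 1) = 0 := by noncomm_ring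
  have hb3 : (N - 1) * (N + 1) + (-N - 1) * (N - 1) = 0 := by noncomm_ring
  rw [hb1, hb2, hb3, hb4]
  calc Matrix.fromBlocks ((2 * (k : ℤ) ^ 2 + 2) • 1) 0 0 ((2 * (k : ℤ) ^ 2 + 2) • 1)
      = (2 * (k : ℤ) ^ 2 + 2) • Matrix.fromBlocks 1 0 0 1 := by
        rw [Matrix.fromBlocks_smul, smul_zero]
    _ = (2 * (k : ℤ) ^ 2 + 2) • 1 := by rw [Matrix.fromBlocks_one]
end

section
/- Let (R,B) be a ℤ-based rng of rank 4k (k ∈ ℕ, k ≥ 1) such that the involution ~ is the identity on B, such that there is an element b_1 ∈ B with b_1 = k·e (where e is the identity of R_ℂ), and such that N_{ii}^j = δ_{1,j}·k for all i, j. Then there exists a Hadamard matrix of size 4k × 4k, i.e. a (4k)×(4k) matrix H with entries in {1,−1} satisfying H·Hᵀ = 4k·I. -/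
open scoped BigOperators

set_option maxHeartbeats 1000000

/-- Let `(R,B)` be a `ℤ`-based rng of rank `4k` (`k ≥ 1`)
whose involution `~` is the identity on `B` (so the `ℤ`-based rng axioms are
stated with `σ = id`), containing a basis element `b i₀ = k • e` (`e` the
identity of `R_ℂ`), and with `N_{ii}^j = δ_{i₀ j} k` for all `i, j`.  Then
there exists a `4k × 4k` Hadamard matrix. -/
theorem zBasedRng_gives_hadamard_matrix
    (k : ℕ) (hk : 1 ≤ k) (A : Type*) [CommRing A] [Algebra ℂ A]
    (b : Module.Basis (Fin (4 * k)) ℂ A)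
    (N : Fin (4 * k) → Fin (4 * k) → Fin (4 * k) → ℤ)
    (hmul : ∀ i j, b i * b j = ∑ m, (N i j m : ℂ) • b m)
    (hτ : ∀ i j, (∑ m, (starRingEnd ℂ) (b.repr 1 m) * (N i j m : ℂ)) =
      if i = j then (1 : ℂ) else 0)
    (he : ∀ j, (starRingEnd ℂ) (b.repr 1 j) = b.repr 1 j)
    (i₀ : Fin (4 * k)) (hb1 : b i₀ = (k : ℂ) • 1)
    (hNii : ∀ i j, N i i j = if j = i₀ then (k : ℤ) else 0) :
    ∃ H : Matrix (Fin (4 * k)) (Fin (4 * k)) ℤ,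
      (∀ i j, H i j = 1 ∨ H i j = -1) ∧
      H * H.transpose = (4 * (k : ℤ)) • 1 := by
  have hk0 : (k : ℂ) ≠ 0 := by
    exact_mod_cast Nat.cast_ne_zero.mpr (by omega)
  -- 1 = k⁻¹ • b i₀
  have h1 : (1 : A) = (k : ℂ)⁻¹ • b i₀ := by
    rw [hb1, smul_smul, inv_mul_cancel₀ hk0, one_smul]
  have hone : ∀ m, b.repr 1 m = if m = i₀ then (k : ℂ)⁻¹ else 0 := by
    intro m
    rw [h1, map_smul, Finsupp.smul_apply, b.repr_self, Finsupp.single_apply]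
    by_cases h : m = i₀ <;> simp [h, smul_eq_mul]
    exact fun hh => absurd hh.symm h
  -- N i j i₀ = k δ_ij
  have hN0 : ∀ i j, (N i j i₀ : ℂ) = if i = j then (k : ℂ) else 0 := by
    intro i j
    have h := hτ i j
    have : ∀ m, (starRingEnd ℂ) (b.repr 1 m) * (N i j m : ℂ)
        = if m = i₀ then (k:ℂ)⁻¹ * (N i j m : ℂ) else 0 := by
      intro m
      rw [he, hone]
      by_cases hm : m = i₀ <;> simp [hm]
    rw [Finset.sum_congr rfl (fun m _ => this m), Finset.sum_ite_eq' Finset.univ i₀] at h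
    simp only [Finset.mem_univ, if_true] at h
    have h' := congrArg (fun z => (k:ℂ) * z) h
    simp only [← mul_assoc, mul_inv_cancel₀ hk0, one_mul, mul_ite, mul_one, mul_zero] at h'
    exact h'
  have hrepr : ∀ i j m, b.repr (b i * b j) m = (N i j m : ℂ) := by
    intro i j m
    rw [hmul, map_sum]
    simp [Finsupp.single_apply, Finset.sum_ite_eq']
  -- b i * b i = k² • 1
  have hsq : ∀ i, b i * b i = ((k:ℂ)^2) • (1 : A) := by
    intro i
    rw [hmul i i]
    have : ∀ m, ((N i i m : ℂ)) • b m = if m = i₀ then (k:ℂ) • b i₀ else 0 := by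
      intro m
      rw [hNii]
      by_cases hm : m = i₀ <;> simp [hm]
    rw [Finset.sum_congr rfl (fun m _ => this m), Finset.sum_ite_eq' Finset.univ i₀]
    simp [hb1, smul_smul, sq]
  -- triple product lemma
  have trip : ∀ i j m, b.repr ((b i * b j) * b m) i₀ = (k:ℂ) * (N i j m : ℂ) := by
    intro i j m
    rw [hmul i j, Finset.sum_mul]
    rw [map_sum, Finsupp.coe_finset_sum, Finset.sum_apply]
    have : ∀ p, (b.repr ((N i j p : ℂ) • b p * b m)) i₀
        = if p = m then (N i j p : ℂ) * (k:ℂ) else 0 := by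
      intro p
      rw [smul_mul_assoc, map_smul, Finsupp.smul_apply, hrepr, hN0, smul_eq_mul]
      by_cases hpm : p = m <;> simp [hpm]
    rw [Finset.sum_congr rfl (fun p _ => this p), Finset.sum_ite_eq' Finset.univ m]
    simp [mul_comm]
  -- quadruple product lemma
  have quad : ∀ i j p q, b.repr ((b i * b j) * (b p * b q)) i₀
      = (k:ℂ) * ∑ m, (N i j m : ℂ) * (N p q m : ℂ) := by
    intro i j p q
    rw [hmul p q, Finset.mul_sum]
    rw [map_sum, Finsupp.coe_finset_sum, Finset.sum_apply]
    have : ∀ m, (b.repr ((b i * b j) * ((N p q m : ℂ) • b m))) i₀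
        = (N i j m : ℂ) * (N p q m : ℂ) * (k : ℂ) := by
      intro m
      rw [mul_smul_comm, map_smul, Finsupp.smul_apply, trip, smul_eq_mul]
      ring
    rw [Finset.sum_congr rfl (fun m _ => this m)]
    rw [Finset.mul_sum]
    exact Finset.sum_congr rfl (fun m _ => by ring)
  -- symmetries of N, as integers
  have Nsym1 : ∀ i j m, N i j m = N j i m := by
    intro i j m
    have : (N i j m : ℂ) = (N j i m : ℂ) := by
      rw [← hrepr i j m, ← hrepr j i m, mul_comm (b i) (b j)]
    exact_mod_cast this
  have Nsym2 : ∀ i j m, N i j m = N j m i := by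
    intro i j m
    have h2 : (k:ℂ) * (N i j m : ℂ) = (k:ℂ) * (N j m i : ℂ) := by
      rw [← trip i j m, ← trip j m i]
      ring_nf
    have := mul_left_cancel₀ hk0 h2
    exact_mod_cast this
  have Nsym3 : ∀ i j m, N i j m = N i m j := by
    intro i j m
    rw [Nsym2 i j m, Nsym2 j m i, Nsym1 m i j]
  -- the fundamental quadratic relation
  have hquadsum : ∀ i j p q, ((b i * b j) * (b p * b q) = (b i * b p) * (b j * b q)) := by
    intro i j p q; ring
  -- pairwise sums: ∑ m, N i l m * N j l m = k² δ_ij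
  have F2 : ∀ i j l, (∑ m, N i l m * N j l m) = if i = j then (k:ℤ)^2 else 0 := by
    intro i j l
    have hC : (k:ℂ) * (∑ m, (N i l m : ℂ) * (N j l m : ℂ))
        = (k:ℂ) * (if i = j then (k:ℂ)^2 else 0) := by
      rw [← quad i l j l]
      have : (b i * b l) * (b j * b l) = ((k:ℂ)^2) • (b i * b j) := by
        have : (b i * b l) * (b j * b l) = (b l * b l) * (b i * b j) := by ring
        rw [this, hsq l, smul_mul_assoc, one_mul]
      rw [this, map_smul, Finsupp.smul_apply, hrepr, hN0, smul_eq_mul]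
      by_cases hij : i = j <;> simp [hij] <;> ring
    have h := mul_left_cancel₀ hk0 hC
    have h2 : ((∑ m, N i l m * N j l m : ℤ) : ℂ) = ((if i = j then (k:ℤ)^2 else 0 : ℤ) : ℂ) := by
      push_cast
      rw [h]
    exact_mod_cast h2
  -- commutation relation: ∑ m, N i l m * N j m p = ∑ m, N j l m * N i m p
  have F3 : ∀ i j l p, (∑ m, N i l m * N j m p) = (∑ m, N j l m * N i m p) := by
    intro i j l p
    have e1 : ∀ m, N j m p = N j p m := fun m => Nsym3 j m p
    have e2 : ∀ m, N i m p = N i p m := fun m => Nsym3 i m p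
    have hC : (k:ℂ) * (∑ m, (N i l m : ℂ) * (N j p m : ℂ))
        = (k:ℂ) * (∑ m, (N j l m : ℂ) * (N i p m : ℂ)) := by
      rw [← quad i l j p, ← quad j l i p]
      congr 1
      ring
    have h := mul_left_cancel₀ hk0 hC
    have h2 : ((∑ m, N i l m * N j p m : ℤ) : ℂ) = ((∑ m, N j l m * N i p m : ℤ) : ℂ) := by
      push_cast; exact h
    have h3 : (∑ m, N i l m * N j p m) = (∑ m, N j l m * N i p m) := by exact_mod_cast h2
    calc (∑ m, N i l m * N j m p) = ∑ m, N i l m * N j p m := by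
          exact Finset.sum_congr rfl (fun m _ => by rw [e1])
      _ = ∑ m, N j l m * N i p m := h3
      _ = ∑ m, N j l m * N i m p := Finset.sum_congr rfl (fun m _ => by rw [e2])
  clear hτ he hone h1 hNii hmul hrepr trip quad hsq hN0 hb1
  -- Part 2: spectral theory over ℝ
  let E := EuclideanSpace ℝ (Fin (4 * k))
  let M : Fin (4 * k) → Matrix (Fin (4 * k)) (Fin (4 * k)) ℝ := fun i => Matrix.of fun l m => ((N i l m : ℤ) : ℝ)
  let T : Fin (4 * k) → E →ₗ[ℝ] E := fun i => Matrix.toEuclideanLin (M i)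
  have hkR : (k : ℝ) ≠ 0 := Nat.cast_ne_zero.mpr (by omega)
  have hherm : ∀ i, (M i).IsHermitian := by
    intro i
    ext l m
    simp only [Matrix.conjTranspose_apply, Matrix.of_apply, M, star_trivial]
    exact_mod_cast Nsym3 i m l
  have hTsym : ∀ i, (T i).IsSymmetric := fun i =>
    Matrix.isHermitian_iff_isSymmetric.mp (hherm i)
  have hmulT : ∀ X Y : Matrix (Fin (4 * k)) (Fin (4 * k)) ℝ,
      Matrix.toEuclideanLin (X * Y) = Matrix.toEuclideanLin X * Matrix.toEuclideanLin Y := by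
    intro X Y
    rw [Matrix.toEuclideanLin_eq_toLin, Matrix.toLin_mul _ (PiLp.basisFun 2 ℝ (Fin (4 * k))) _ X Y]
    rfl
  have hMcomm : ∀ i j, M i * M j = M j * M i := by
    intro i j
    ext l p
    simp only [Matrix.mul_apply, Matrix.of_apply, M]
    exact_mod_cast F3 i j l p
  have hTcomm : Pairwise (Function.onFun Commute T) := by
    intro i j _
    show T i * T j = T j * T i
    simp only [T, ← hmulT, hMcomm i j]
  -- T i squared is k² • 1
  have hMsq : ∀ i, M i * M i = ((k:ℝ)^2) • (1 : Matrix (Fin (4 * k)) (Fin (4 * k)) ℝ) := by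
    intro i
    ext l p
    simp only [Matrix.mul_apply, Matrix.of_apply, M, Matrix.smul_apply, smul_eq_mul]
    have h1 : (∑ m, N i l m * N i m p) = if l = p then (k:ℤ)^2 else 0 := by
      calc (∑ m, N i l m * N i m p) = ∑ m, N l i m * N p i m := by
            refine Finset.sum_congr rfl (fun m _ => ?_)
            rw [Nsym1 i l m, Nsym3 i m p, Nsym1 i p m]
        _ = if l = p then (k:ℤ)^2 else 0 := F2 l p i
    by_cases hlp : l = p
    · subst hlp
      simp only [if_pos rfl] at h1
      rw [Matrix.one_apply_eq, mul_one]
      exact_mod_cast h1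
    · simp only [if_neg hlp] at h1
      rw [Matrix.one_apply_ne hlp, mul_zero]
      exact_mod_cast h1
  have hTsq : ∀ i, T i * T i = ((k:ℝ)^2) • (1 : E →ₗ[ℝ] E) := by
    intro i
    rw [show T i * T i = Matrix.toEuclideanLin (M i * M i) from (hmulT _ _).symm, hMsq,
      map_smul, Matrix.toEuclideanLin_eq_toLin, Matrix.toLin_one]
    rfl
  classical
  have hkRpos : (0:ℝ) < (k:ℝ) := by exact_mod_cast Nat.pos_of_ne_zero (by omega)
  -- eigenvalues off ±k have trivial eigenspaces
  have heigbot : ∀ i (μ : ℝ), μ ≠ (k:ℝ) → μ ≠ -(k:ℝ) →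
      Module.End.eigenspace (T i) μ = ⊥ := by
    intro i μ h1 h2
    rw [eq_bot_iff]
    intro x hx
    have hx' : T i x = μ • x := Module.End.mem_eigenspace_iff.mp hx
    have e1 : (T i * T i) x = (μ * μ) • x := by
      rw [Module.End.mul_apply, hx', map_smul, hx', smul_smul]
    have e2 : (T i * T i) x = ((k:ℝ)^2) • x := by rw [hTsq]; simp
    have e3 : (μ * μ - (k:ℝ)^2) • x = 0 := by
      rw [sub_smul, ← e1, e2, sub_self]
    have e4 : μ * μ - (k:ℝ)^2 ≠ 0 := by
      intro hc
      have : (μ - (k:ℝ)) * (μ + (k:ℝ)) = 0 := by rw [← hc]; ring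
      rcases mul_eq_zero.mp this with h | h
      · exact h1 (by linarith)
      · exact h2 (by linarith)
    have := (smul_eq_zero.mp e3).resolve_left e4
    simpa using this
  -- joint eigenspaces indexed by sign patterns
  let ev : (Fin (4 * k) → Bool) → Fin (4 * k) → ℝ := fun χ i => if χ i then (k:ℝ) else -(k:ℝ)
  have hev_inj : Function.Injective ev := by
    intro f g hfg
    funext i
    have := congrFun hfg i
    by_cases hf : f i <;> by_cases hg : g i <;> simp [ev, hf, hg] at this ⊢ <;> linarith
  let V : (Fin (4 * k) → Bool) → Submodule ℝ E :=
    fun χ => ⨅ i, Module.End.eigenspace (T i) (ev χ i)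
  have orthFam : OrthogonalFamily ℝ (fun χ => V χ) (fun χ => (V χ).subtypeₗᵢ) :=
    (LinearMap.IsSymmetric.orthogonalFamily_iInf_eigenspaces hTsym).comp hev_inj
  have htop : ⨆ χ, V χ = ⊤ := by
    have hsup := LinearMap.IsSymmetric.iSup_iInf_eq_top_of_commute hTsym hTcomm
    refine le_antisymm le_top ?_
    rw [← hsup]
    refine iSup_le fun γ => ?_
    by_cases hall : ∀ i, γ i = (k:ℝ) ∨ γ i = -(k:ℝ)
    · have hEq : (⨅ i, Module.End.eigenspace (T i) (γ i))
          = V (fun i => decide (γ i = (k:ℝ))) := by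
        refine iInf_congr fun i => ?_
        congr 1
        by_cases h : γ i = (k:ℝ)
        · simp [ev, h]
        · simp [ev, h]
          exact ((hall i).resolve_left h)
      rw [hEq]
      exact le_iSup _ _
    · push_neg at hall
      obtain ⟨i, hi1, hi2⟩ := hall
      refine le_trans (iInf_le _ i) ?_
      rw [heigbot i _ hi1 hi2]
      exact bot_le
  have hinternal : DirectSum.IsInternal V :=
    orthFam.isInternal_iff.mpr (by rw [htop, Submodule.top_orthogonal_eq_bot])
  have hnrank : Module.finrank ℝ E = 4 * k := finrank_euclideanSpace_fin
  let v : OrthonormalBasis (Fin (4 * k)) ℝ E :=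
    hinternal.subordinateOrthonormalBasis hnrank orthFam
  let σ : Fin (4 * k) → (Fin (4 * k) → Bool) :=
    fun a => hinternal.subordinateOrthonormalBasisIndex hnrank a orthFam
  have heigv : ∀ a i, T i (v a) = ev (σ a) i • v a := by
    intro a i
    have hm := hinternal.subordinateOrthonormalBasis_subordinate hnrank a orthFam
    exact Module.End.mem_eigenspace_iff.mp ((Submodule.mem_iInf _).mp hm i)
  -- the trace computation
  have htr : ∀ i j, ∑ a, ev (σ a) i * ev (σ a) j = if i = j then 4*(k:ℝ)^3 else 0 := by
    intro i j
    have t1 : LinearMap.trace ℝ E (T i * T j) = ∑ a, ev (σ a) i * ev (σ a) j := by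
      rw [LinearMap.trace_eq_matrix_trace ℝ v.toBasis, Matrix.trace]
      refine Finset.sum_congr rfl fun a _ => ?_
      rw [Matrix.diag_apply, LinearMap.toMatrix_apply, OrthonormalBasis.coe_toBasis,
        Module.End.mul_apply, heigv a j, map_smul, heigv a i, smul_smul, map_smul,
        Finsupp.smul_apply, OrthonormalBasis.coe_toBasis_repr_apply,
        OrthonormalBasis.repr_self]
      simp [EuclideanSpace.single_apply, mul_comm]
    have t2 : LinearMap.trace ℝ E (T i * T j) = Matrix.trace (M i * M j) := by
      rw [show T i * T j = Matrix.toEuclideanLin (M i * M j) from (hmulT _ _).symm,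
        Matrix.toEuclideanLin_eq_toLin,
        LinearMap.trace_eq_matrix_trace ℝ (PiLp.basisFun 2 ℝ (Fin (4 * k))),
        LinearMap.toMatrix_toLin]
    have hll : ∀ l, (∑ m, N i l m * N j m l) = if i = j then (k:ℤ)^2 else 0 := by
      intro l
      calc (∑ m, N i l m * N j m l) = ∑ m, N i l m * N j l m :=
            Finset.sum_congr rfl fun m _ => by rw [Nsym3 j m l]
        _ = _ := F2 i j l
    have t3 : Matrix.trace (M i * M j) = if i = j then 4*(k:ℝ)^3 else 0 := by
      rw [Matrix.trace]
      have hdiag : ∀ l, (M i * M j).diag l = ((if i = j then (k:ℤ)^2 else 0 : ℤ) : ℝ) := by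
        intro l
        simp only [Matrix.diag_apply, Matrix.mul_apply, Matrix.of_apply, M]
        exact_mod_cast hll l
      rw [Finset.sum_congr rfl fun l _ => hdiag l, Finset.sum_const, Finset.card_univ,
        Fintype.card_fin]
      by_cases hij : i = j <;> simp [hij] <;> push_cast <;> ring
    rw [← t1, t2, t3]
  -- build the Hadamard matrix
  refine ⟨Matrix.of fun i a => if σ a i then 1 else -1, fun i a => by
    dsimp only [Matrix.of_apply]; split <;> simp, ?_⟩
  ext i j
  rw [Matrix.mul_apply, Matrix.smul_apply, Matrix.one_apply, smul_eq_mul]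
  simp only [Matrix.transpose_apply, Matrix.of_apply]
  have hsplit : ∀ a, ev (σ a) i * ev (σ a) j
      = (k:ℝ)^2 * (((if σ a i then (1:ℤ) else -1) * (if σ a j then 1 else -1) : ℤ) : ℝ) := by
    intro a
    by_cases hsi : σ a i <;> by_cases hsj : σ a j <;> simp [ev, hsi, hsj] <;> ring
  have hsum : (k:ℝ)^2 * ∑ a, (((if σ a i then (1:ℤ) else -1) * (if σ a j then 1 else -1) : ℤ) : ℝ)
      = (k:ℝ)^2 * ((if i = j then (4*(k:ℤ)) else 0 : ℤ) : ℝ) := by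
    rw [Finset.mul_sum, Finset.sum_congr rfl fun a _ => (hsplit a).symm, htr i j]
    by_cases hij : i = j <;> simp [hij] <;> push_cast <;> ring
  have hk2 : ((k:ℝ)^2) ≠ 0 := pow_ne_zero _ hkR
  have hZ : ((∑ a, ((if σ a i then (1:ℤ) else -1) * (if σ a j then 1 else -1)) : ℤ) : ℝ)
      = ((if i = j then (4*(k:ℤ)) else 0 : ℤ) : ℝ) := by
    push_cast
    exact mul_left_cancel₀ hk2 (by push_cast at hsum ⊢; exact hsum)
  have hZ' : (∑ a, ((if σ a i then (1:ℤ) else -1) * (if σ a j then 1 else -1)) : ℤ)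
      = (if i = j then (4*(k:ℤ)) else 0 : ℤ) := by exact_mod_cast hZ
  rw [hZ']
  by_cases hij : i = j <;> simp [hij]
end
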